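/- For any sequence of lists A_t ∈ Π_K(E) and any attraction weight vector w ∈ [0,1]^L with top-K set A*, the per-round expected regret f(A*, w) − f(A_t, w) is at most ∑_{k=1}^K Δ_{σ_t(k), k} where σ_t(k) is the item in A_t placed in decreasing-w order at position k and Δ_{e,k} = w(k) − w(e) ≥ 0; moreover f(A*, w) − f(A_t, w) = 0 if A_t contains the same set of items as A* (in any order). -/
import Mathlib

lemma aux_prod_sub_prod {ι : Type*} [DecidableEq ι] (s : Finset ι) (u v : ι → ℝ)
    (hv0 : ∀ i ∈ s, 0 ≤ v i) (hu1 : ∀ i ∈ s, u i ≤ 1)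
    (hvu : ∀ i ∈ s, v i ≤ u i) :
    ∏ i ∈ s, u i - ∏ i ∈ s, v i ≤ ∑ i ∈ s, (u i - v i) := by
  induction s using Finset.induction_on with
  | empty => simp
  | @insert a s has ih =>
    simp only [Finset.prod_insert has, Finset.sum_insert has]
    have hv0' : ∀ i ∈ s, 0 ≤ v i := fun i hi => hv0 i (Finset.mem_insert_of_mem hi)
    have hu1' : ∀ i ∈ s, u i ≤ 1 := fun i hi => hu1 i (Finset.mem_insert_of_mem hi)
    have hvu' : ∀ i ∈ s, v i ≤ u i := fun i hi => hvu i (Finset.mem_insert_of_mem hi)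
    have ih' := ih hv0' hu1' hvu'
    have hPv0 : 0 ≤ ∏ i ∈ s, v i := Finset.prod_nonneg hv0'
    have hPv1 : ∏ i ∈ s, v i ≤ 1 :=
      Finset.prod_le_one hv0' (fun i hi => le_trans (hvu' i hi) (hu1' i hi))
    have hPle : ∏ i ∈ s, v i ≤ ∏ i ∈ s, u i :=
      Finset.prod_le_prod hv0' hvu'
    have hva := hv0 a (Finset.mem_insert_self a s)
    have hua := hu1 a (Finset.mem_insert_self a s)
    have hvua := hvu a (Finset.mem_insert_self a s)
    have h0ua : 0 ≤ u a := le_trans hva hvua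
    nlinarith [mul_le_one₀ hua hPv0 hPv1]

/-- Position-wise gap decomposition of the per-round regret in the cascade
model. Items `0,...,L-1` have `w 0 ≥ ⋯ ≥ w (L-1)` in `[0,1]`; the optimal list
is `A* = (0,...,K-1)`; `a` is any played list of `K` distinct items and `σ` a
permutation placing it in decreasing-`w` order. Then the per-round expected
regret `f(A*,w) - f(A,w)` is at most `∑ₖ Δ_{σ(k),k}` with each
`Δ_{σ(k),k} = w(k) - w(a(σ(k))) ≥ 0`; moreover the regret is `0` whenever `a`
contains the same set of items as `A*` (in any order). -/
theorem stmt17 (K L : ℕ) (hKL : K ≤ L)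
    (w : Fin L → ℝ) (hw : ∀ i, w i ∈ Set.Icc (0 : ℝ) 1)
    (hsorted : ∀ i j : Fin L, i ≤ j → w j ≤ w i)
    (a : Fin K → Fin L) (ha : Function.Injective a)
    (σ : Equiv.Perm (Fin K))
    (hσ : ∀ k j : Fin K, k ≤ j → w (a (σ j)) ≤ w (a (σ k))) :
    ((1 - ∏ k, (1 - w (Fin.castLE hKL k))) - (1 - ∏ k, (1 - w (a k)))
        ≤ ∑ k, (w (Fin.castLE hKL k) - w (a (σ k)))) ∧
      (∀ k, 0 ≤ w (Fin.castLE hKL k) - w (a (σ k))) ∧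
      (Finset.image a Finset.univ = Finset.image (Fin.castLE hKL) Finset.univ →
        (1 - ∏ k, (1 - w (Fin.castLE hKL k))) - (1 - ∏ k, (1 - w (a k))) = 0) := by
  have key : ∀ k : Fin K, w (a (σ k)) ≤ w (Fin.castLE hKL k) := by
    intro k
    -- pigeonhole: some j ≤ k has (a (σ j)).val ≥ k.val
    have hex : ∃ j : Fin K, j ≤ k ∧ (k : ℕ) ≤ (a (σ j) : ℕ) := by
      by_contra h
      push_neg at h
      have hmaps : ∀ j ∈ Finset.Iic k, a (σ j) ∈ Finset.Iio (Fin.castLE hKL k) := by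
        intro j hj
        simp only [Finset.mem_Iic] at hj
        have := h j hj
        simp only [Finset.mem_Iio, Fin.lt_def, Fin.coe_castLE]
        exact this
      have hinj : Set.InjOn (fun j => a (σ j)) (Finset.Iic k) := by
        intro x _ y _ hxy
        exact σ.injective (ha hxy)
      have hcard := Finset.card_le_card_of_injOn _ hmaps hinj
      rw [Fin.card_Iic, Fin.card_Iio] at hcard
      simp only [Fin.coe_castLE] at hcard
      omega
    obtain ⟨j, hj, hjk⟩ := hex
    have h1 : w (a (σ k)) ≤ w (a (σ j)) := hσ j k hj
    have h2 : w (a (σ j)) ≤ w (Fin.castLE hKL k) := by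
      apply hsorted
      rw [Fin.le_def]
      simpa using hjk
    exact le_trans h1 h2
  refine ⟨?_, fun k => by linarith [key k], ?_⟩
  · have hperm : ∏ k, (1 - w (a k)) = ∏ k, (1 - w (a (σ k))) :=
      (Equiv.prod_comp σ (fun k => 1 - w (a k))).symm
    rw [hperm]
    have := aux_prod_sub_prod Finset.univ (fun k => 1 - w (a (σ k)))
      (fun k => 1 - w (Fin.castLE hKL k))
      (fun i _ => by show (0:ℝ) ≤ 1 - w (Fin.castLE hKL i); linarith [(hw (Fin.castLE hKL i)).2])
      (fun i _ => by show (1:ℝ) - w (a (σ i)) ≤ 1; linarith [(hw (a (σ i))).1])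
      (fun i _ => by show (1:ℝ) - w (Fin.castLE hKL i) ≤ 1 - w (a (σ i)); linarith [key i])
    have hsum : ∑ k, ((1 - w (a (σ k))) - (1 - w (Fin.castLE hKL k)))
        = ∑ k, (w (Fin.castLE hKL k) - w (a (σ k))) := by
      apply Finset.sum_congr rfl; intros; ring
    rw [hsum] at this
    linarith
  · intro himg
    have h1 : ∏ x ∈ Finset.image a Finset.univ, (1 - w x) = ∏ k, (1 - w (a k)) :=
      Finset.prod_image (fun x _ y _ h => ha h)
    have h2 : ∏ x ∈ Finset.image (Fin.castLE hKL) Finset.univ, (1 - w x)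
        = ∏ k, (1 - w (Fin.castLE hKL k)) :=
      Finset.prod_image (fun x _ y _ h => Fin.castLE_injective hKL h)
    rw [← h1, ← h2, himg]
    ring
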